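/- arXiv:1801.06404 — 2 statements merged into one kernel-verified Lean document; each statement's English description precedes it below -/
import Mathlib

section
/- The porous exponential domination number of the King grid K_7 equals 4. -/
open SimpleGraph Finset

/-- The weight `2^(1 - dist(u,v))` that vertex `u` sends to vertex `v` in graph `G`. -/
noncomputable def expWeight {V : Type*} (G : SimpleGraph V) (u v : V) : ℝ :=
  (2 : ℝ) ^ ((1 : ℤ) - (G.dist u v : ℤ))

/-- `D` is a porous exponential dominating set of `G` if every vertex receives total
weight at least `1`. -/
def IsPorousExpDomSet {V : Type*} [Fintype V] (G : SimpleGraph V) (D : Finset V) : Prop :=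
  ∀ v : V, 1 ≤ ∑ d ∈ D, expWeight G d v

/-- The porous exponential domination number: the minimum cardinality of a porous
exponential dominating set. -/
noncomputable def porousExpDomNumber {V : Type*} [Fintype V] (G : SimpleGraph V) : ℕ :=
  sInf {k | ∃ D : Finset V, IsPorousExpDomSet G D ∧ D.card = k}

/-- The King grid `K_n = P_n ⊠ P_n`: vertices `(i,j)` with `1 ≤ i,j ≤ n`, two distinct
vertices adjacent iff both coordinates differ by at most 1. -/
def kingGrid (n : ℕ) : SimpleGraph (Fin n × Fin n) :=
  SimpleGraph.fromRel fun v w =>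
    ((v.1 : ℤ) - (w.1 : ℤ)).natAbs ≤ 1 ∧ ((v.2 : ℤ) - (w.2 : ℤ)).natAbs ≤ 1

/-- The Slant grid `S_n`: the grid `P_n □ P_n` together with the diagonal edges
`(i,j) ~ (i+1,j+1)`. -/
def slantGrid (n : ℕ) : SimpleGraph (Fin n × Fin n) :=
  SimpleGraph.fromRel fun v w =>
    ((w.1 : ℕ) = (v.1 : ℕ) + 1 ∧ (w.2 : ℕ) = (v.2 : ℕ)) ∨
    ((w.1 : ℕ) = (v.1 : ℕ) ∧ (w.2 : ℕ) = (v.2 : ℕ) + 1) ∨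
    ((w.1 : ℕ) = (v.1 : ℕ) + 1 ∧ (w.2 : ℕ) = (v.2 : ℕ) + 1)

/-- The `n`-dimensional hypercube: vertices are `{0,1}^n`, adjacent iff they differ in
exactly one coordinate. -/
def hypercube (n : ℕ) : SimpleGraph (Fin n → Bool) :=
  SimpleGraph.fromRel fun u v => hammingDist u v = 1

/-! ### Auxiliary material for `kingGrid 7` -/

/-- Chebyshev distance on `Fin 7 × Fin 7`. -/
def cheb (u v : Fin 7 × Fin 7) : ℕ :=
  max ((u.1 : ℤ) - (v.1 : ℤ)).natAbs ((u.2 : ℤ) - (v.2 : ℤ)).natAbs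

lemma king_adj {u v : Fin 7 × Fin 7} :
    (kingGrid 7).Adj u v ↔ u ≠ v ∧ cheb u v ≤ 1 := by
  rw [kingGrid, SimpleGraph.fromRel_adj, cheb]
  constructor
  · rintro ⟨h, h2 | h2⟩ <;> exact ⟨h, by omega⟩
  · rintro ⟨h, h2⟩; exact ⟨h, Or.inl ⟨by omega, by omega⟩⟩

lemma cheb_eq_zero {u v : Fin 7 × Fin 7} (h : cheb u v = 0) : u = v := by
  rw [cheb] at h
  have h1 := u.1.isLt; have h2 := u.2.isLt; have h3 := v.1.isLt; have h4 := v.2.isLt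
  have : u.1.val = v.1.val ∧ u.2.val = v.2.val := by omega
  exact Prod.ext (Fin.ext this.1) (Fin.ext this.2)

/-- Move `a` one step toward `b`. -/
def mv (a b : Fin 7) : Fin 7 :=
  if h : a.val < b.val then ⟨a.val + 1, by have := b.isLt; omega⟩
  else if h2 : b.val < a.val then ⟨a.val - 1, by have := a.isLt; omega⟩
  else a

lemma mv_val (a b : Fin 7) :
    (mv a b).val = if a.val < b.val then a.val + 1 else if b.val < a.val then a.val - 1 else a.val := by
  rw [mv]; split_ifs <;> rfl

lemma mv_abs (a b : Fin 7) :
    ((mv a b : ℤ) - (b : ℤ)).natAbs = ((a : ℤ) - (b : ℤ)).natAbs - 1 ∧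
      ((a : ℤ) - (mv a b : ℤ)).natAbs ≤ 1 := by
  have h := mv_val a b
  have h1 : ((mv a b : Fin 7) : ℤ) = ((mv a b).val : ℤ) := rfl
  rw [h1, h]
  split_ifs <;> constructor <;> omega

lemma exists_walk (u v : Fin 7 × Fin 7) :
    ∃ p : (kingGrid 7).Walk u v, p.length ≤ cheb u v := by
  generalize hn : cheb u v = n
  induction n generalizing u with
  | zero =>
    have he : u = v := cheb_eq_zero hn
    subst he
    exact ⟨SimpleGraph.Walk.nil, Nat.zero_le _⟩
  | succ n ih =>
    set w : Fin 7 × Fin 7 := (mv u.1 v.1, mv u.2 v.2) with hw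
    have m1 := mv_abs u.1 v.1
    have m2 := mv_abs u.2 v.2
    have hcw : cheb w v = n := by
      rw [cheb] at hn ⊢
      simp only [hw]
      omega
    have hne : u ≠ w := by
      intro he
      have : cheb u v = cheb w v := by rw [← he]
      omega
    have hadj : (kingGrid 7).Adj u w := by
      rw [king_adj]
      refine ⟨hne, ?_⟩
      rw [cheb]
      simp only [hw]
      omega
    obtain ⟨p, hp⟩ := ih w hcw
    exact ⟨SimpleGraph.Walk.cons hadj p, by rw [SimpleGraph.Walk.length_cons]; omega⟩

lemma cheb_triangle (u w v : Fin 7 × Fin 7) : cheb u v ≤ cheb u w + cheb w v := by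
  simp only [cheb]; omega

lemma cheb_le_length {u v : Fin 7 × Fin 7} (p : (kingGrid 7).Walk u v) :
    cheb u v ≤ p.length := by
  induction p with
  | nil => simp [cheb]
  | @cons a b c h p ih =>
    have h1 := (king_adj.mp h).2
    have h2 := cheb_triangle a b c
    rw [SimpleGraph.Walk.length_cons]
    omega

lemma king_dist (u v : Fin 7 × Fin 7) : (kingGrid 7).dist u v = cheb u v := by
  obtain ⟨p, hp⟩ := exists_walk u v
  apply le_antisymm ((SimpleGraph.dist_le p).trans hp)
  obtain ⟨q, hq⟩ := (SimpleGraph.Reachable.exists_walk_length_eq_dist ⟨p⟩ : _)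
  rw [← hq]
  exact cheb_le_length q

lemma cheb_le_six (u v : Fin 7 × Fin 7) : cheb u v ≤ 6 := by
  have h1 := u.1.isLt; have h2 := u.2.isLt; have h3 := v.1.isLt; have h4 := v.2.isLt
  rw [cheb]; omega

/-- The dominating set `{(1,1),(1,5),(5,1),(5,5)}`. -/
def D0 : Finset (Fin 7 × Fin 7) := {(1, 1), (1, 5), (5, 1), (5, 5)}

lemma D0_card : D0.card = 4 := by decide

lemma D0_key : ∀ v : Fin 7 × Fin 7, (64 : ℕ) ≤ ∑ d ∈ D0, 2 ^ (7 - cheb d v) := by decide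

lemma expWeight_eq (d v : Fin 7 × Fin 7) :
    expWeight (kingGrid 7) d v = ((2 ^ (7 - cheb d v) : ℕ) : ℝ) / 64 := by
  rw [expWeight, king_dist]
  have hc : cheb d v ≤ 6 := cheb_le_six d v
  have h : (1 : ℤ) - (cheb d v : ℤ) = ((7 - cheb d v : ℕ) : ℤ) - 6 := by omega
  rw [h, zpow_sub₀ (two_ne_zero), zpow_natCast]
  push_cast
  norm_num

lemma D0_dom : IsPorousExpDomSet (kingGrid 7) D0 := by
  intro v
  have key := D0_key v
  calc (1 : ℝ) = 64 / 64 := by norm_num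
    _ ≤ ((∑ d ∈ D0, 2 ^ (7 - cheb d v) : ℕ) : ℝ) / 64 := by
        apply div_le_div_of_nonneg_right ?_ (by norm_num)
        exact_mod_cast key
    _ = ∑ d ∈ D0, expWeight (kingGrid 7) d v := by
        rw [Nat.cast_sum, Finset.sum_div]
        exact Finset.sum_congr rfl fun d _ => (expWeight_eq d v).symm

lemma card_ge (D : Finset (Fin 7 × Fin 7)) (hD : IsPorousExpDomSet (kingGrid 7) D) :
    4 ≤ D.card := by
  by_contra hcon
  push_neg at hcon
  have hcard : D.card ≤ 3 := by omega
  have corner : ∀ c : Fin 7 × Fin 7, ∃ d ∈ D, cheb d c ≤ 2 := by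
    intro c
    by_contra hc
    push_neg at hc
    have hb : ∀ d ∈ D, expWeight (kingGrid 7) d c ≤ 1 / 4 := by
      intro d hd
      rw [expWeight, king_dist]
      have h3 : 3 ≤ cheb d c := hc d hd
      have : (2 : ℝ) ^ ((1 : ℤ) - (cheb d c : ℤ)) ≤ (2 : ℝ) ^ (-2 : ℤ) :=
        zpow_le_zpow_right₀ one_le_two (by omega)
      calc (2 : ℝ) ^ ((1 : ℤ) - (cheb d c : ℤ)) ≤ (2 : ℝ) ^ (-2 : ℤ) := this
        _ = 1 / 4 := by norm_num
    have hsum := Finset.sum_le_card_nsmul D _ _ hb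
    have h1 := hD c
    have hcc : (D.card : ℝ) ≤ 3 := by exact_mod_cast hcard
    rw [nsmul_eq_mul] at hsum
    linarith
  obtain ⟨d1, hd1, hc1⟩ := corner (0, 0)
  obtain ⟨d2, hd2, hc2⟩ := corner (0, 6)
  obtain ⟨d3, hd3, hc3⟩ := corner (6, 0)
  obtain ⟨d4, hd4, hc4⟩ := corner (6, 6)
  have z0 : (((0 : Fin 7)) : ℤ) = 0 := rfl
  have z6 : (((6 : Fin 7)) : ℤ) = 6 := rfl
  rw [cheb] at hc1 hc2 hc3 hc4
  simp only [z0, z6] at hc1 hc2 hc3 hc4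
  have hsub : ({d1, d2, d3, d4} : Finset (Fin 7 × Fin 7)) ⊆ D := by
    intro x hx
    simp only [Finset.mem_insert, Finset.mem_singleton] at hx
    rcases hx with rfl | rfl | rfl | rfl <;> assumption
  have hne12 : d1 ≠ d2 := fun h => by rw [h] at hc1; omega
  have hne13 : d1 ≠ d3 := fun h => by rw [h] at hc1; omega
  have hne14 : d1 ≠ d4 := fun h => by rw [h] at hc1; omega
  have hne23 : d2 ≠ d3 := fun h => by rw [h] at hc2; omega
  have hne24 : d2 ≠ d4 := fun h => by rw [h] at hc2; omega
  have hne34 : d3 ≠ d4 := fun h => by rw [h] at hc3; omega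
  have h4 : ({d1, d2, d3, d4} : Finset (Fin 7 × Fin 7)).card = 4 := by
    rw [Finset.card_insert_of_notMem (by simp [hne12, hne13, hne14]),
      Finset.card_insert_of_notMem (by simp [hne23, hne24]),
      Finset.card_insert_of_notMem (by simp [hne34]), Finset.card_singleton]
  have := Finset.card_le_card hsub
  omega

/-- `γ*_e(K_7) = 4`. -/
theorem kingGrid_seven : porousExpDomNumber (kingGrid 7) = 4 := by
  rw [porousExpDomNumber]
  apply le_antisymm
  · exact Nat.sInf_le ⟨D0, D0_dom, D0_card⟩
  · refine le_csInf ⟨4, ⟨D0, D0_dom, D0_card⟩⟩ ?_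
    rintro k ⟨D, hD, rfl⟩
    exact card_ge D hD
end

section
/- For all n ≥ 1, the porous exponential domination number of the n-dimensional hypercube satisfies γ*_e(Q_n) ≤ (√2)^n, i.e., γ*_e(Q_n)² ≤ 2^n. -/
open SimpleGraph Finset

lemma hyp_adj {n : ℕ} {u v : Fin n → Bool} :
    (hypercube n).Adj u v ↔ hammingDist u v = 1 := by
  constructor
  · rintro ⟨hne, h | h⟩
    · exact h
    · rw [hammingDist_comm]; exact h
  · intro h
    refine ⟨fun he => ?_, Or.inl h⟩
    subst he
    rw [hammingDist_self] at h
    omega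

lemma hd_update {n : ℕ} (u v : Fin n → Bool) (i : Fin n) (hi : u i ≠ v i) :
    hammingDist u (Function.update u i (v i)) = 1 := by
  have hset : ({j | u j ≠ Function.update u i (v i) j} : Finset (Fin n)) = {i} := by
    ext j
    rcases eq_or_ne j i with rfl | hj
    · simp [Function.update_self, hi]
    · simp [Function.update_of_ne hj, hj]
  rw [hammingDist, hset, Finset.card_singleton]

lemma hd_update' {n : ℕ} (u v : Fin n → Bool) (i : Fin n) (hi : u i ≠ v i) :
    hammingDist (Function.update u i (v i)) v + 1 = hammingDist u v := by
  have hset : ({j | Function.update u i (v i) j ≠ v j} : Finset (Fin n))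
      = ({j | u j ≠ v j} : Finset (Fin n)).erase i := by
    ext j
    rcases eq_or_ne j i with rfl | hj
    · simp [Function.update_self]
    · simp [Function.update_of_ne hj, hj]
  have hmem : i ∈ ({j | u j ≠ v j} : Finset (Fin n)) := by simp [hi]
  have hpos := Finset.card_pos.mpr ⟨i, hmem⟩
  rw [hammingDist, hammingDist, hset, Finset.card_erase_of_mem hmem]
  omega

lemma exists_walk_s17 {n : ℕ} (m : ℕ) : ∀ (u v : Fin n → Bool), hammingDist u v = m →
    ∃ w : (hypercube n).Walk u v, w.length = m := by
  induction m with
  | zero =>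
    intro u v h
    obtain rfl := eq_of_hammingDist_eq_zero h
    exact ⟨SimpleGraph.Walk.nil, rfl⟩
  | succ m ih =>
    intro u v h
    have hne : u ≠ v := by
      rintro rfl; rw [hammingDist_self] at h; omega
    obtain ⟨i, hi⟩ := Function.ne_iff.mp hne
    have h2 : hammingDist (Function.update u i (v i)) v = m := by
      have := hd_update' u v i hi; omega
    obtain ⟨w, hw⟩ := ih _ v h2
    exact ⟨SimpleGraph.Walk.cons (hyp_adj.mpr (hd_update u v i hi)) w, by simp [hw]⟩

lemma hd_le_walk {n : ℕ} {u v : Fin n → Bool} (w : (hypercube n).Walk u v) :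
    hammingDist u v ≤ w.length := by
  induction w with
  | nil => simp
  | @cons a b c h p ih =>
    have h1 := hyp_adj.mp h
    have h2 := hammingDist_triangle a b c
    rw [SimpleGraph.Walk.length_cons]
    omega

lemma hyp_dist {n : ℕ} (u v : Fin n → Bool) :
    (hypercube n).dist u v = hammingDist u v := by
  obtain ⟨w, hw⟩ := exists_walk_s17 (hammingDist u v) u v rfl
  refine le_antisymm (hw ▸ SimpleGraph.dist_le w) ?_
  obtain ⟨w', hw'⟩ := SimpleGraph.Reachable.exists_walk_length_eq_dist ⟨w⟩
  exact hw' ▸ hd_le_walk w'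

def emb (n : ℕ) (x : Fin (n / 2) → Bool) : Fin n → Bool :=
  fun i => if h : (i : ℕ) / 2 < n / 2 then x ⟨(i : ℕ) / 2, h⟩ else false

lemma emb_inj (n : ℕ) : Function.Injective (emb n) := by
  intro x y hxy
  funext k
  have hk : 2 * (k : ℕ) < n := by have := k.2; omega
  have h2 : 2 * (k : ℕ) / 2 = (k : ℕ) := by omega
  have := congrFun hxy ⟨2 * (k : ℕ), hk⟩
  simpa [emb, h2] using this

lemma sum_range_two_mul {M : Type*} [AddCommMonoid M] (t : ℕ) (f : ℕ → M) :
    ∑ i ∈ Finset.range (2 * t), f i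
      = ∑ k ∈ Finset.range t, (f (2 * k) + f (2 * k + 1)) := by
  induction t with
  | zero => simp
  | succ t ih =>
    have h : 2 * (t + 1) = 2 * t + 1 + 1 := by ring
    rw [h, Finset.sum_range_succ, Finset.sum_range_succ, ih, Finset.sum_range_succ]
    abel

def Find (n : ℕ) (v : Fin n → Bool) (d : Fin n → Bool) (i : ℕ) : ℕ :=
  if h : i < n then (if d ⟨i, h⟩ ≠ v ⟨i, h⟩ then 1 else 0) else 0

def Gfun (n : ℕ) (v : Fin n → Bool) (k : Fin (n / 2)) (b : Bool) : ℕ :=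
  Find n v (fun _ => b) (2 * k) + Find n v (fun _ => b) (2 * k + 1)

def cval (n : ℕ) (v : Fin n → Bool) : ℕ :=
  ∑ i ∈ Finset.Ico (2 * (n / 2)) n, Find n v (fun _ => false) i

lemma hham_eq (n : ℕ) (v d : Fin n → Bool) :
    hammingDist d v = ∑ i ∈ Finset.range n, Find n v d i := by
  rw [hammingDist, Finset.card_filter, ← Fin.sum_univ_eq_sum_range (fun i => Find n v d i)]
  refine Finset.sum_congr rfl fun i _ => ?_
  simp [Find]

lemma hdist_decomp (n : ℕ) (v : Fin n → Bool) (x : Fin (n / 2) → Bool) :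
    hammingDist (emb n x) v = (∑ k : Fin (n / 2), Gfun n v k (x k)) + cval n v := by
  have h2t : 2 * (n / 2) ≤ n := by omega
  have hsplit := (Finset.sum_Ico_consecutive (fun i => Find n v (emb n x) i)
    (Nat.zero_le (2 * (n / 2))) h2t).symm
  simp only [← Finset.range_eq_Ico] at hsplit
  calc hammingDist (emb n x) v
      = ∑ i ∈ Finset.range n, Find n v (emb n x) i := hham_eq n v (emb n x)
    _ = (∑ i ∈ Finset.range (2 * (n / 2)), Find n v (emb n x) i)
          + ∑ i ∈ Finset.Ico (2 * (n / 2)) n, Find n v (emb n x) i := hsplit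
    _ = (∑ k ∈ Finset.range (n / 2),
          (Find n v (emb n x) (2 * k) + Find n v (emb n x) (2 * k + 1)))
          + cval n v := by
        rw [sum_range_two_mul]
        congr 1
        refine Finset.sum_congr rfl fun i hi => ?_
        obtain ⟨hi1, hi2⟩ := Finset.mem_Ico.mp hi
        have hnot : ¬ (i / 2 < n / 2) := by omega
        simp [Find, emb, hi2, hnot]
    _ = (∑ k : Fin (n / 2),
          (Find n v (emb n x) (2 * (k : ℕ)) + Find n v (emb n x) (2 * (k : ℕ) + 1)))
          + cval n v := by
        rw [Fin.sum_univ_eq_sum_range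
          (fun m => Find n v (emb n x) (2 * m) + Find n v (emb n x) (2 * m + 1))]
    _ = (∑ k : Fin (n / 2), Gfun n v k (x k)) + cval n v := by
        congr 1
        refine Finset.sum_congr rfl fun k _ => ?_
        have hk1 : 2 * (k : ℕ) < n := by have := k.2; omega
        have hk2 : 2 * (k : ℕ) + 1 < n := by have := k.2; omega
        have hq1 : (2 * (k : ℕ)) / 2 = (k : ℕ) := by omega
        have hq2 : (2 * (k : ℕ) + 1) / 2 = (k : ℕ) := by omega
        have he1 : emb n x ⟨2 * (k : ℕ), hk1⟩ = x k := by simp [emb, hq1]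
        have he2 : emb n x ⟨2 * (k : ℕ) + 1, hk2⟩ = x k := by simp [emb, hq2]
        simp [Find, Gfun, hk1, hk2, he1, he2]

lemma cval_le_one (n : ℕ) (v : Fin n → Bool) : cval n v ≤ 1 := by
  have h1 : cval n v ≤ ∑ _i ∈ Finset.Ico (2 * (n / 2)) n, 1 := by
    apply Finset.sum_le_sum
    intro i hi
    simp only [Find]
    split_ifs <;> omega
  simp [Nat.card_Ico] at h1
  omega

lemma factor_ge (n : ℕ) (v : Fin n → Bool) (k : Fin (n / 2)) :
    1 ≤ ∑ b : Bool, ((2 : ℝ)⁻¹) ^ Gfun n v k b := by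
  have hk1 : 2 * (k : ℕ) < n := by have := k.2; omega
  have hk2 : 2 * (k : ℕ) + 1 < n := by have := k.2; omega
  rw [Fintype.sum_bool]
  cases h1 : v ⟨2 * (k : ℕ), hk1⟩ <;> cases h2 : v ⟨2 * (k : ℕ) + 1, hk2⟩ <;>
    simp [Gfun, Find, hk1, hk2, h1, h2] <;> norm_num

lemma expWeight_eq_s17 {n : ℕ} (d v : Fin n → Bool) :
    expWeight (hypercube n) d v = 2 * ((2 : ℝ)⁻¹) ^ hammingDist d v := by
  rw [expWeight, hyp_dist, sub_eq_add_neg, zpow_add₀ (by norm_num : (2 : ℝ) ≠ 0), zpow_neg,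
    zpow_one, zpow_natCast, inv_pow]

lemma key (n : ℕ) (v : Fin n → Bool) :
    1 ≤ ∑ x : Fin (n / 2) → Bool, expWeight (hypercube n) (emb n x) v := by
  classical
  have hq0 : (0 : ℝ) ≤ (2 : ℝ)⁻¹ := by norm_num
  have hrw : ∀ x : Fin (n / 2) → Bool, expWeight (hypercube n) (emb n x) v
      = 2 * (((2 : ℝ)⁻¹) ^ cval n v * ∏ k : Fin (n / 2), ((2 : ℝ)⁻¹) ^ Gfun n v k (x k)) := by
    intro x
    rw [expWeight_eq_s17, hdist_decomp n v x, pow_add, Finset.prod_pow_eq_pow_sum]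
    ring
  rw [Finset.sum_congr rfl fun x _ => hrw x, ← Finset.mul_sum, ← Finset.mul_sum]
  have hps : (∑ x : Fin (n / 2) → Bool, ∏ k : Fin (n / 2), ((2 : ℝ)⁻¹) ^ Gfun n v k (x k))
      = ∏ k : Fin (n / 2), ∑ b : Bool, ((2 : ℝ)⁻¹) ^ Gfun n v k b := by
    rw [Finset.prod_univ_sum, Fintype.piFinset_univ]
  rw [hps]
  have hP : 1 ≤ ∏ k : Fin (n / 2), ∑ b : Bool, ((2 : ℝ)⁻¹) ^ Gfun n v k b := by
    have := Finset.prod_le_prod (s := Finset.univ) (f := fun _ : Fin (n / 2) => (1 : ℝ))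
      (g := fun k => ∑ b : Bool, ((2 : ℝ)⁻¹) ^ Gfun n v k b)
      (fun _ _ => by norm_num) (fun k _ => factor_ge n v k)
    simpa using this
  have hqc : (2 : ℝ)⁻¹ ≤ ((2 : ℝ)⁻¹) ^ cval n v := by
    have := pow_le_pow_of_le_one hq0 (by norm_num : (2 : ℝ)⁻¹ ≤ 1) (cval_le_one n v)
    simpa using this
  nlinarith [hP, hqc, pow_nonneg hq0 (cval n v)]

/-- For `n ≥ 1`, `γ*_e(Q_n) ≤ (√2)^n`, i.e. `γ*_e(Q_n)² ≤ 2^n`. -/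
theorem hypercube_porousExpDomNumber_upper (n : ℕ) (hn : 1 ≤ n) :
    porousExpDomNumber (hypercube n) ^ 2 ≤ 2 ^ n := by
  classical
  have hmem : porousExpDomNumber (hypercube n) ≤ 2 ^ (n / 2) := by
    apply Nat.sInf_le
    refine ⟨Finset.univ.image (emb n), ?_, ?_⟩
    · intro v
      rw [Finset.sum_image (fun x _ y _ h => emb_inj n h)]
      exact key n v
    · rw [Finset.card_image_of_injective _ (emb_inj n)]
      simp
  calc porousExpDomNumber (hypercube n) ^ 2 ≤ (2 ^ (n / 2)) ^ 2 :=
        Nat.pow_le_pow_left hmem 2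
    _ = 2 ^ (n / 2 * 2) := by rw [← pow_mul]
    _ ≤ 2 ^ n := Nat.pow_le_pow_right (by norm_num) (by omega)
end
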